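/- Let θ_1,…,θ_n ∈ (0,π/2) with ∑_{i=1}^n θ_i = π. Then (∑_{i=1}^n tan θ_i)^2 − (n tan(π/n)) (∑_{i=1}^n tan θ_i) ≤ (∑_{i=1}^n tan θ_i)^3 − (n tan(π/n))^3, with equality if and only if θ_1 = ⋯ = θ_n = π/n. -/

import Mathlib

open Real

lemma strictConvexOn_tan' : StrictConvexOn ℝ (Set.Ico 0 (π/2)) Real.tan := by
  apply strictConvexOn_of_deriv2_pos (convex_Ico _ _)
  · apply Real.continuousOn_tan.mono
    intro x hx
    simp only [Set.mem_setOf_eq]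
    exact (Real.cos_pos_of_mem_Ioo ⟨by linarith [hx.1, pi_pos], hx.2⟩).ne'
  · intro x hx
    rw [interior_Ico] at hx
    have hc : 0 < cos x := Real.cos_pos_of_mem_Ioo ⟨by linarith [hx.1, pi_pos], hx.2⟩
    have hs : 0 < sin x := Real.sin_pos_of_pos_of_lt_pi hx.1 (by linarith [pi_pos, hx.2])
    have hd : HasDerivAt (fun y => 1 / cos y ^ 2) (2 * sin x / cos x ^ 3) x := by
      have h1 : HasDerivAt (fun y => cos y ^ 2) (2 * cos x * (-sin x)) x := by
        simpa using ((Real.hasDerivAt_cos x).fun_pow 2)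
      have h2 := h1.fun_inv (by positivity)
      simp only [one_div]
      refine h2.congr_deriv ?_
      field_simp
    have : deriv^[2] Real.tan x = 2 * sin x / cos x ^ 3 := by
      simp only [Function.iterate_succ, Function.iterate_zero, Function.comp_apply, id]
      rw [show deriv Real.tan = fun y => 1 / cos y ^ 2 from funext Real.deriv_tan]
      exact hd.deriv
    rw [this]
    positivity

open Real in
theorem stmt8 (n : ℕ) (hn : 3 ≤ n)
    (θ : Fin n → ℝ) (hθ : ∀ i, θ i ∈ Set.Ioo (0:ℝ) (π / 2))
    (hsum : ∑ i, θ i = π) :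
    (∑ i, tan (θ i)) ^ 2 - ((n : ℝ) * tan (π / n)) * (∑ i, tan (θ i))
      ≤ (∑ i, tan (θ i)) ^ 3 - ((n : ℝ) * tan (π / n)) ^ 3
    ∧ ((∑ i, tan (θ i)) ^ 2 - ((n : ℝ) * tan (π / n)) * (∑ i, tan (θ i))
        = (∑ i, tan (θ i)) ^ 3 - ((n : ℝ) * tan (π / n)) ^ 3
      ↔ ∀ i, θ i = π / n) := by
  have hπ : 0 < π := pi_pos
  have hn0 : (0:ℝ) < n := by positivity
  have hn3 : (3:ℝ) ≤ n := by exact_mod_cast hn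
  set S := ∑ i, tan (θ i) with hS
  set T := (n : ℝ) * tan (π / n) with hT
  have hmemn : π / n ∈ Set.Ioo 0 (π/2) := by
    constructor
    · positivity
    · rw [div_lt_div_iff₀ hn0 two_pos]
      nlinarith
  have h₀ : ∀ i ∈ (Finset.univ : Finset (Fin n)), (0:ℝ) < (n:ℝ)⁻¹ := fun _ _ => by positivity
  have h₁ : ∑ _i : Fin n, (n:ℝ)⁻¹ = 1 := by
    simp [Finset.sum_const, Finset.card_univ]
    field_simp
  have hmem : ∀ i ∈ Finset.univ, θ i ∈ Set.Ico 0 (π/2) :=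
    fun i _ => ⟨(hθ i).1.le, (hθ i).2⟩
  have hbar : ∑ i, (n:ℝ)⁻¹ • θ i = π / n := by
    simp only [smul_eq_mul, ← Finset.mul_sum, hsum]
    field_simp
  -- Jensen
  have hJ : tan (π / n) ≤ (n:ℝ)⁻¹ * S := by
    have := strictConvexOn_tan'.convexOn.map_sum_le (fun i hi => (h₀ i hi).le) h₁ hmem
    rw [hbar] at this
    simpa [smul_eq_mul, ← Finset.mul_sum] using this
  have hTS : T ≤ S := by
    rw [hT]
    calc (n:ℝ) * tan (π / n) ≤ (n:ℝ) * ((n:ℝ)⁻¹ * S) := by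
          exact mul_le_mul_of_nonneg_left hJ hn0.le
      _ = S := by field_simp
  have hTiff : S = T ↔ ∀ i, θ i = π / n := by
    have hiff := strictConvexOn_tan'.map_sum_eq_iff h₀ h₁ hmem
    rw [hbar] at hiff
    constructor
    · intro hst
      have : tan (π / n) = ∑ i, (n:ℝ)⁻¹ • tan (θ i) := by
        simp only [smul_eq_mul, ← Finset.mul_sum, ← hS]
        rw [hst, hT]
        field_simp
      intro i
      exact hiff.1 this i (Finset.mem_univ i)
    · intro h
      rw [hS, hT]
      simp [h]
  -- T > π > 3
  have hTgt : (3:ℝ) < T := by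
    have h1 : π / n < tan (π / n) := Real.lt_tan hmemn.1 hmemn.2
    have : π < T := by
      rw [hT]
      calc π = (n:ℝ) * (π / n) := by field_simp
        _ < (n:ℝ) * tan (π / n) := by
            exact mul_lt_mul_of_pos_left h1 hn0
    linarith [pi_gt_three]
  constructor
  · nlinarith [mul_nonneg (sub_nonneg.2 hTS) (show (0:ℝ) ≤ S^2 + S*T + T^2 - S by nlinarith)]
  · rw [← hTiff]
    constructor
    · intro heq
      by_contra hne
      have hlt : T < S := lt_of_le_of_ne hTS (Ne.symm hne)
      nlinarith [mul_pos (sub_pos.2 hlt) (show (0:ℝ) < S^2 + S*T + T^2 - S by nlinarith)]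
    · intro h
      rw [h]; ring
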